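/- Coherence regularization corollary: assume σ has full support and let δ ∈ (0,1). For any nonempty set R of d-policies, define π̂ as a maximizer over π ∈ R of α_train(π;π*) − √((−2χ(π) + log₂ e + log₂(1/δ))/(2N)) and π̄ as a maximizer over π ∈ R of α(π;π*). Then with probability at least 1−δ over the i.i.d. uniform draw of the training contexts, α(π̂;π*) ≥ α(π̄;π*) − 2·√((2·max(−χ(π̂), −χ(π̄)) + log₂ e + log₂(1/δ))/(2N)). -/

import Mathlib

open Finset

/-- A learning system: a commutative additive monoid `M` of stochastic policies,
a finite nonempty set `S` of contexts, a finite nonempty behavior set `A s` for each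
context `s`, and an inference function `inf` assigning to each policy and context a
probability mass function on the behaviors of that context, satisfying the chain rule. -/
structure LearningSystem (M : Type) [AddCommMonoid M] (S : Type) [Fintype S] [DecidableEq S] :
    Type where
  A : S → Finset M
  A_nonempty : ∀ s, (A s).Nonempty
  inf : M → S → M → ℝ
  inf_nonneg : ∀ φ s a, 0 ≤ inf φ s a
  inf_eq_zero_of_not_mem : ∀ φ s a, a ∉ A s → inf φ s a = 0
  inf_sum_one : ∀ φ s, ∑ a ∈ A s, inf φ s a = 1
  chain_rule : ∀ (φ : M) (s₁ s₂ : S) (a₁ a₂ : M), a₁ ∈ A s₁ → a₂ ∈ A s₂ →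
    inf φ s₁ a₁ * inf (φ + a₁) s₂ a₂ = inf φ s₂ a₂ * inf (φ + a₂) s₁ a₁

namespace LearningSystem

variable {M S : Type} [AddCommMonoid M] [Fintype S] [DecidableEq S]

/-- A deterministic policy (d-policy): an assignment of a behavior `π s ∈ A s` to
every context `s ∈ S`. -/
abbrev DPolicy (L : LearningSystem M S) : Type := ∀ s : S, {a : M // a ∈ L.A s}

/-- `σ` has full support: every behavior of every context has positive probability
under every prior policy. -/
def FullSupport (L : LearningSystem M S) : Prop :=
  ∀ (φ : M) (s : S) (a : M), a ∈ L.A s → 0 < L.inf φ s a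

/-- The coherence of a d-policy `π` relative to the prior policy `φ`, computed along
the enumeration `f` of contexts:
`∑ n, log₂ σ(φ + ∑_{m<n} π(f m), f n)(π (f n))`. -/
noncomputable def cohAlong (L : LearningSystem M S) (φ : M) (π : L.DPolicy)
    {k : ℕ} (f : Fin k → S) : ℝ :=
  ∑ n : Fin k, Real.logb 2
    (L.inf (φ + ∑ m ∈ Finset.univ.filter (fun m => m < n), ((π (f m) : M)))
      (f n) ((π (f n) : M)))

/-- The product `∏ n, σ(φ + ∑_{m<n} π(f m), f n)(π (f n))` along the enumeration `f`. -/
noncomputable def prodAlong (L : LearningSystem M S) (φ : M) (π : L.DPolicy)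
    {k : ℕ} (f : Fin k → S) : ℝ :=
  ∏ n : Fin k,
    L.inf (φ + ∑ m ∈ Finset.univ.filter (fun m => m < n), ((π (f m) : M)))
      (f n) ((π (f n) : M))

/-- The coherence `χ(π)` (relative to the zero prior policy), with respect to the fixed
enumeration `e` of the contexts. -/
noncomputable def coherence (L : LearningSystem M S) {k : ℕ} (e : Fin k ≃ S)
    (π : L.DPolicy) : ℝ :=
  L.cohAlong 0 π ⇑e

/-- Accuracy of `π` with respect to the ground truth `πs`:
`α(π;π*) = (1/|S|) ∑_{s∈S} 1[π(s) = π*(s)]`. -/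
noncomputable def accuracy [DecidableEq M] (L : LearningSystem M S)
    (π πs : L.DPolicy) : ℝ :=
  (∑ s : S, if (π s : M) = ((πs s : M)) then (1 : ℝ) else 0) / (Fintype.card S : ℝ)

/-- Training accuracy of `π` on the training contexts `shat`:
`α_train(π;π*) = (1/N) ∑_i 1[π(ŝ_i) = π*(ŝ_i)]`. -/
noncomputable def trainAccuracy [DecidableEq M] (L : LearningSystem M S) {N : ℕ}
    (shat : Fin N → S) (π πs : L.DPolicy) : ℝ :=
  (∑ i : Fin N, if (π (shat i) : M) = ((πs (shat i) : M)) then (1 : ℝ) else 0) / (N : ℝ)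

end LearningSystem

namespace LearningSystem
variable {M S : Type} [AddCommMonoid M] [Fintype S] [DecidableEq S]

lemma sum_prod_chain (L : LearningSystem M S) :
    ∀ (k : ℕ) (t : Fin k → S) (φ : M),
      ∑ v : (∀ n : Fin k, {a : M // a ∈ L.A (t n)}),
        ∏ n, L.inf (φ + ∑ m ∈ Finset.univ.filter (fun m => m < n), ((v m : M)))
          (t n) ((v n : M)) = 1 := by
  intro k
  induction k with
  | zero => intro t φ; simp
  | succ k ih =>
    intro t φ
    rw [← (Fin.consEquiv (fun n : Fin (k+1) => {a : M // a ∈ L.A (t n)})).sum_comp]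
    rw [Fintype.sum_prod_type]
    have key : ∀ (a : {a : M // a ∈ L.A (t 0)})
        (w : ∀ n : Fin k, {x : M // x ∈ L.A (t n.succ)}),
        (∏ n : Fin (k+1), L.inf
          (φ + ∑ m ∈ Finset.univ.filter (fun m => m < n),
            ((Fin.cons a w : ∀ n : Fin (k+1), {x : M // x ∈ L.A (t n)}) m : M))
          (t n) (((Fin.cons a w : ∀ n : Fin (k+1), {x : M // x ∈ L.A (t n)}) n : M)))
        = L.inf φ (t 0) (a : M) *
          ∏ n : Fin k, L.inf ((φ + (a : M)) +
            ∑ m ∈ Finset.univ.filter (fun m => m < n), ((w m : M)))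
            (t n.succ) ((w n : M)) := by
      intro a w
      rw [Fin.prod_univ_succ]
      congr 1
      · have : (Finset.univ.filter (fun m : Fin (k+1) => m < 0)) = ∅ := by
          simp [Finset.filter_eq_empty_iff]
        simp [this]
      · apply Finset.prod_congr rfl
        intro n _
        have hsum : ∑ m ∈ Finset.univ.filter (fun m : Fin (k+1) => m < n.succ),
            ((Fin.cons a w : ∀ n : Fin (k+1), {x : M // x ∈ L.A (t n)}) m : M)
            = (a : M) + ∑ m ∈ Finset.univ.filter (fun m : Fin k => m < n), ((w m : M)) := by
          rw [Finset.sum_filter, Fin.sum_univ_succ]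
          simp [Fin.succ_lt_succ_iff, Fin.succ_pos, Finset.sum_filter]
        rw [hsum, Fin.cons_succ, ← add_assoc]
    calc ∑ a : {a : M // a ∈ L.A (t 0)}, ∑ w : (∀ n : Fin k, {x : M // x ∈ L.A (t n.succ)}),
          (∏ n : Fin (k+1), L.inf
            (φ + ∑ m ∈ Finset.univ.filter (fun m => m < n),
              (((Fin.consEquiv (fun n : Fin (k+1) => {a : M // a ∈ L.A (t n)})) (a, w) m : M)))
            (t n) ((((Fin.consEquiv (fun n : Fin (k+1) => {a : M // a ∈ L.A (t n)})) (a, w) n : M))))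
        = ∑ a : {a : M // a ∈ L.A (t 0)}, L.inf φ (t 0) (a : M) *
            ∑ w : (∀ n : Fin k, {x : M // x ∈ L.A (t n.succ)}),
            ∏ n : Fin k, L.inf ((φ + (a : M)) +
              ∑ m ∈ Finset.univ.filter (fun m => m < n), ((w m : M)))
              (t n.succ) ((w n : M)) := by
          apply Finset.sum_congr rfl; intro a _
          rw [Finset.mul_sum]
          apply Finset.sum_congr rfl; intro w _
          simpa [Fin.consEquiv] using key a w
      _ = ∑ a : {a : M // a ∈ L.A (t 0)}, L.inf φ (t 0) (a : M) := by
          apply Finset.sum_congr rfl; intro a _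
          rw [ih (fun n => t n.succ) (φ + (a : M)), mul_one]
      _ = ∑ a ∈ L.A (t 0), L.inf φ (t 0) a := Finset.sum_coe_sort _ _
      _ = 1 := L.inf_sum_one φ (t 0)

end LearningSystem

namespace LearningSystem
variable {M S : Type} [AddCommMonoid M] [Fintype S] [DecidableEq S]

lemma sum_prodAlong (L : LearningSystem M S) {k : ℕ} (e : Fin k ≃ S) :
    ∑ π : L.DPolicy, L.prodAlong 0 π ⇑e = 1 := by
  classical
  rw [← (Equiv.piCongrLeft (fun s : S => {a : M // a ∈ L.A s}) e).sum_comp]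
  rw [← L.sum_prod_chain k ⇑e 0]
  apply Finset.sum_congr rfl
  intro v _
  unfold prodAlong
  apply Finset.prod_congr rfl
  intro n _
  simp only [Equiv.piCongrLeft_apply_apply]

lemma inf_le_one (L : LearningSystem M S) (φ : M) (s : S) {a : M} (ha : a ∈ L.A s) :
    L.inf φ s a ≤ 1 := by
  rw [← L.inf_sum_one φ s]
  exact Finset.single_le_sum (fun b _ => L.inf_nonneg φ s b) ha

lemma coherence_nonpos (L : LearningSystem M S) (hfs : L.FullSupport) {k : ℕ}
    (e : Fin k ≃ S) (π : L.DPolicy) : L.coherence e π ≤ 0 := by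
  unfold coherence cohAlong
  apply Finset.sum_nonpos
  intro n _
  apply Real.logb_nonpos (by norm_num)
  · exact (hfs _ _ _ (π (e n)).2).le
  · exact L.inf_le_one _ _ (π (e n)).2

lemma exp_coherence (L : LearningSystem M S) (hfs : L.FullSupport) {k : ℕ}
    (e : Fin k ≃ S) (π : L.DPolicy) :
    Real.exp (Real.log 2 * L.coherence e π) = L.prodAlong 0 π ⇑e := by
  unfold coherence cohAlong prodAlong
  rw [Finset.mul_sum, Real.exp_sum]
  apply Finset.prod_congr rfl
  intro n _
  rw [Real.logb, mul_div_cancel₀ _ (by positivity : Real.log 2 ≠ 0)]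
  exact Real.exp_log (hfs _ _ _ (π (e n)).2)

lemma prodAlong_pos (L : LearningSystem M S) (hfs : L.FullSupport) {k : ℕ}
    (e : Fin k ≃ S) (π : L.DPolicy) : 0 < L.prodAlong 0 π ⇑e := by
  apply Finset.prod_pos
  intro n _
  exact hfs _ _ _ (π (e n)).2

end LearningSystem

lemma bern_mgf (μ lam : ℝ) (h0 : 0 ≤ μ) (h1 : μ ≤ 1) (hl : 0 ≤ lam) :
    (1 - μ) * Real.exp (-(lam * μ)) + μ * Real.exp (lam * (1 - μ)) ≤ Real.exp (lam^2 / 8) := by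
  set d : ℝ → ℝ := fun x => 1 - μ + μ * Real.exp x with hd_def
  have hdpos : ∀ x, 0 < d x := by
    intro x
    rcases lt_or_eq_of_le h1 with h | h
    · have : 0 < 1 - μ := by linarith
      have : 0 ≤ μ * Real.exp x := mul_nonneg h0 (Real.exp_pos x).le
      simp only [hd_def]; nlinarith
    · subst h; simp only [hd_def]; simpa using (Real.exp_pos x)
  -- derivative of d
  have hdD : ∀ x, HasDerivAt d (μ * Real.exp x) x := by
    intro x
    exact ((Real.hasDerivAt_exp x).const_mul μ).const_add (1 - μ)
  set G : ℝ → ℝ := fun x => x / 4 + μ - μ * Real.exp x / d x with hG_def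
  set F : ℝ → ℝ := fun x => x ^ 2 / 8 + x * μ - Real.log (d x) with hF_def
  have hGD : ∀ x, HasDerivAt G (1/4 - (μ * Real.exp x * d x - μ * Real.exp x * (μ * Real.exp x)) / (d x)^2) x := by
    intro x
    have hq : HasDerivAt (fun y => μ * Real.exp y / d y)
        ((μ * Real.exp x * d x - μ * Real.exp x * (μ * Real.exp x)) / (d x)^2) x :=
      ((Real.hasDerivAt_exp x).const_mul μ).div (hdD x) (hdpos x).ne'
    have h1' : HasDerivAt (fun y : ℝ => y / 4 + μ) (1/4) x := by
      simpa using ((hasDerivAt_id x).div_const 4).add_const μ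
    exact h1'.sub hq
  have hFD : ∀ x, HasDerivAt F (G x) x := by
    intro x
    have h1' : HasDerivAt (fun y : ℝ => y ^ 2 / 8 + y * μ) (x / 4 + μ) x := by
      have := ((hasDerivAt_pow 2 x).div_const 8).add ((hasDerivAt_id x).mul_const μ)
      exact this.congr_deriv (by rw [show (2:ℕ) - 1 = 1 from rfl]; push_cast; ring)
    have h2' : HasDerivAt (fun y => Real.log (d y)) (μ * Real.exp x / d x) x :=
      (hdD x).log (hdpos x).ne'
    exact h1'.sub h2'
  -- G is nonneg on [0, ∞)
  have hGderiv_nonneg : ∀ x, 0 ≤ 1/4 - (μ * Real.exp x * d x - μ * Real.exp x * (μ * Real.exp x)) / (d x)^2 := by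
    intro x
    set p := μ * Real.exp x / d x with hp_def
    have hdne : d x ≠ 0 := (hdpos x).ne'
    have hkey : (μ * Real.exp x * d x - μ * Real.exp x * (μ * Real.exp x)) / (d x)^2 = p - p^2 := by
      rw [hp_def]; field_simp
    rw [hkey]
    have hp0 : 0 ≤ p := div_nonneg (mul_nonneg h0 (Real.exp_pos x).le) (hdpos x).le
    have hp1 : p ≤ 1 := by
      rw [hp_def, div_le_one (hdpos x)]
      simp only [hd_def]; nlinarith [Real.exp_pos x]
    nlinarith [sq_nonneg (p - 1/2)]
  have hGmono : MonotoneOn G (Set.Ici (0:ℝ)) := by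
    apply monotoneOn_of_deriv_nonneg (convex_Ici 0)
    · exact (fun x _ => (hGD x).differentiableAt.continuousAt.continuousWithinAt)
    · intro x _; exact (hGD x).differentiableAt.differentiableWithinAt
    · intro x _; rw [(hGD x).deriv]; exact hGderiv_nonneg x
  have hG0 : G 0 = 0 := by simp [hG_def, hd_def]
  have hGnonneg : ∀ x ∈ Set.Ici (0:ℝ), 0 ≤ G x := by
    intro x hx
    have := hGmono (Set.self_mem_Ici) hx hx
    rwa [hG0] at this
  have hFmono : MonotoneOn F (Set.Ici (0:ℝ)) := by
    apply monotoneOn_of_deriv_nonneg (convex_Ici 0)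
    · exact (fun x _ => (hFD x).differentiableAt.continuousAt.continuousWithinAt)
    · intro x _; exact (hFD x).differentiableAt.differentiableWithinAt
    · intro x hx
      rw [(hFD x).deriv]
      exact hGnonneg x (le_of_lt (by simpa using hx))
  have hF0 : F 0 = 0 := by simp [hF_def, hd_def]
  have hFlam : 0 ≤ F lam := by
    have := hFmono (Set.self_mem_Ici) (Set.mem_Ici.mpr hl) hl
    rwa [hF0] at this
  -- conclude
  have hlog : Real.log (d lam) ≤ lam ^ 2 / 8 + lam * μ := by
    simp only [hF_def] at hFlam; linarith
  have hLHS : (1 - μ) * Real.exp (-(lam * μ)) + μ * Real.exp (lam * (1 - μ))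
      = Real.exp (-(lam * μ)) * d lam := by
    simp only [hd_def]
    rw [show lam * (1 - μ) = -(lam * μ) + lam by ring, Real.exp_add]
    ring
  rw [hLHS, ← Real.exp_log (hdpos lam), ← Real.exp_add]
  apply Real.exp_le_exp.mpr
  linarith


lemma sum_fun_prod {S : Type} [Fintype S] [DecidableEq S] (N : ℕ) (g : S → ℝ) :
    ∑ shat : Fin N → S, ∏ i, g (shat i) = (∑ s, g s) ^ N := by
  induction N with
  | zero => simp
  | succ n ih =>
    rw [← (Fin.consEquiv (fun _ : Fin (n+1) => S)).sum_comp]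
    simp only [Fin.consEquiv, Equiv.coe_fn_mk, Fin.prod_univ_succ, Fin.cons_zero, Fin.cons_succ]
    rw [Fintype.sum_prod_type]
    simp only [← Finset.mul_sum]
    rw [← Finset.sum_mul, ih, pow_succ]
    ring

lemma hoeffding_count {S : Type} [Fintype S] [DecidableEq S] [Nonempty S] (N : ℕ) (x : S → ℝ)
    (hx : ∀ s, x s = 0 ∨ x s = 1) (t : ℝ) (ht : 0 ≤ t) :
    ((Finset.univ.filter fun shat : Fin N → S =>
        (N : ℝ) * ((∑ s, x s) / (Fintype.card S : ℝ)) + N * t ≤ ∑ i, x (shat i)).card : ℝ)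
      ≤ Real.exp (-2 * N * t ^ 2) * (Fintype.card S : ℝ) ^ N := by
  classical
  set μ : ℝ := (∑ s, x s) / (Fintype.card S : ℝ) with hμ
  have hcard : (0 : ℝ) < (Fintype.card S : ℝ) := by
    exact_mod_cast Fintype.card_pos
  have hx0 : ∀ s, 0 ≤ x s := fun s => by rcases hx s with h | h <;> simp [h]
  have hx1 : ∀ s, x s ≤ 1 := fun s => by rcases hx s with h | h <;> simp [h]
  have hμ0 : 0 ≤ μ := div_nonneg (Finset.sum_nonneg fun s _ => hx0 s) hcard.le
  have hμ1 : μ ≤ 1 := by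
    rw [hμ, div_le_one hcard]
    calc ∑ s, x s ≤ ∑ s : S, (1:ℝ) := Finset.sum_le_sum fun s _ => hx1 s
    _ = (Fintype.card S : ℝ) := by simp
  -- step 1: card ≤ sum of exponentials
  have step1 : ((Finset.univ.filter fun shat : Fin N → S =>
        (N : ℝ) * μ + N * t ≤ ∑ i, x (shat i)).card : ℝ)
      ≤ ∑ shat : Fin N → S, Real.exp (4*t*((∑ i, x (shat i)) - N*μ) - 4*N*t^2) := by
    rw [Finset.card_eq_sum_ones, Nat.cast_sum]
    rw [← Finset.sum_filter_add_sum_filter_not Finset.univ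
      (fun shat : Fin N → S => (N : ℝ) * μ + N * t ≤ ∑ i, x (shat i))
      (fun shat => Real.exp (4*t*((∑ i, x (shat i)) - N*μ) - 4*N*t^2))]
    have h1 : ∀ shat ∈ (Finset.univ.filter fun shat : Fin N → S =>
        (N : ℝ) * μ + N * t ≤ ∑ i, x (shat i)), ((1:ℕ):ℝ) ≤
        Real.exp (4*t*((∑ i, x (shat i)) - N*μ) - 4*N*t^2) := by
      intro shat hs
      rw [Finset.mem_filter] at hs
      have : (0:ℝ) ≤ 4*t*((∑ i, x (shat i)) - N*μ) - 4*N*t^2 := by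
        have := hs.2
        nlinarith [mul_nonneg (mul_nonneg (by norm_num : (0:ℝ) ≤ 4) ht)
          (sub_nonneg.mpr hs.2)]
      simpa using Real.one_le_exp this
    calc (∑ shat ∈ (Finset.univ.filter fun shat : Fin N → S =>
          (N : ℝ) * μ + N * t ≤ ∑ i, x (shat i)), ((1:ℕ):ℝ))
        ≤ ∑ shat ∈ (Finset.univ.filter fun shat : Fin N → S =>
          (N : ℝ) * μ + N * t ≤ ∑ i, x (shat i)),
          Real.exp (4*t*((∑ i, x (shat i)) - N*μ) - 4*N*t^2) := Finset.sum_le_sum h1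
      _ ≤ _ := by
          apply le_add_of_nonneg_right
          exact Finset.sum_nonneg fun _ _ => (Real.exp_pos _).le
  -- step 2: factorize exponential sum
  have step2 : ∑ shat : Fin N → S, Real.exp (4*t*((∑ i, x (shat i)) - N*μ) - 4*N*t^2)
      = Real.exp (-4*N*t^2) * (∑ s, Real.exp (4*t*(x s - μ))) ^ N := by
    rw [← sum_fun_prod N (fun s => Real.exp (4*t*(x s - μ)))]
    rw [Finset.mul_sum]
    apply Finset.sum_congr rfl
    intro shat _
    rw [← Real.exp_sum, ← Real.exp_add]
    congr 1
    have hsum : ∑ i : Fin N, 4*t*(x (shat i) - μ)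
        = 4*t*(∑ i, x (shat i)) - N*(4*t*μ) := by
      simp [mul_sub, Finset.sum_sub_distrib, ← Finset.mul_sum, Finset.sum_const,
        Finset.card_univ]
    rw [hsum]; ring
  -- step 3: bound the single-sample MGF
  have step3 : (∑ s, Real.exp (4*t*(x s - μ)))
      ≤ (Fintype.card S : ℝ) * Real.exp (2*t^2) := by
    have hterm : ∀ s, Real.exp (4*t*(x s - μ))
        = x s * Real.exp ((4*t)*(1 - μ)) + (1 - x s) * Real.exp (-((4*t)*μ)) := by
      intro s
      rcases hx s with h | h <;> rw [h] <;> ring_nf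
    have hsx : ∑ s, x s = μ * (Fintype.card S : ℝ) := by
      rw [hμ]; field_simp
    calc (∑ s, Real.exp (4*t*(x s - μ)))
        = ∑ s, (x s * Real.exp ((4*t)*(1 - μ)) + (1 - x s) * Real.exp (-((4*t)*μ))) :=
          Finset.sum_congr rfl fun s _ => hterm s
      _ = (Fintype.card S : ℝ) *
          ((1 - μ) * Real.exp (-((4*t)*μ)) + μ * Real.exp ((4*t)*(1 - μ))) := by
          rw [Finset.sum_add_distrib, ← Finset.sum_mul, ← Finset.sum_mul, hsx,
            Finset.sum_sub_distrib, Finset.sum_const, Finset.card_univ, hsx]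
          push_cast; ring
      _ ≤ (Fintype.card S : ℝ) * Real.exp ((4*t)^2/8) := by
          apply mul_le_mul_of_nonneg_left _ hcard.le
          exact bern_mgf μ (4*t) hμ0 hμ1 (by linarith)
      _ = (Fintype.card S : ℝ) * Real.exp (2*t^2) := by norm_num; ring_nf
  -- assemble
  calc ((Finset.univ.filter fun shat : Fin N → S =>
        (N : ℝ) * μ + N * t ≤ ∑ i, x (shat i)).card : ℝ)
      ≤ ∑ shat : Fin N → S, Real.exp (4*t*((∑ i, x (shat i)) - N*μ) - 4*N*t^2) := step1
    _ = Real.exp (-4*N*t^2) * (∑ s, Real.exp (4*t*(x s - μ))) ^ N := step2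
    _ ≤ Real.exp (-4*N*t^2) * ((Fintype.card S : ℝ) * Real.exp (2*t^2)) ^ N := by
        apply mul_le_mul_of_nonneg_left _ (Real.exp_pos _).le
        exact pow_le_pow_left₀ (Finset.sum_nonneg fun _ _ => (Real.exp_pos _).le) step3 N
    _ = Real.exp (-2 * N * t ^ 2) * (Fintype.card S : ℝ) ^ N := by
        have h : Real.exp (-4*N*t^2) * ((Fintype.card S : ℝ) * Real.exp (2*t^2)) ^ N
            = (Real.exp (-4*N*t^2) * Real.exp (N*(2*t^2))) * (Fintype.card S : ℝ)^N := by
          rw [mul_pow, ← Real.exp_nat_mul]; ring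
        rw [h, ← Real.exp_add]; congr 1; ring

set_option maxHeartbeats 1600000 in
/-- Coherence regularization corollary: let `R` be a nonempty set of d-policies, let
`π̂` (a function of the training draw) maximize the regularized training accuracy over
`R`, and let `π̄` maximize the true accuracy over `R`. Then with probability at least
`1 − δ` over the i.i.d. uniform draw of the training contexts,
`α(π̂;π*) ≥ α(π̄;π*) − 2√((2 max(−χ(π̂), −χ(π̄)) + log₂ e + log₂(1/δ))/(2N))`. -/
theorem coherence_regularization {M S : Type} [AddCommMonoid M] [DecidableEq M]
    [Fintype S] [DecidableEq S] [Nonempty S] (L : LearningSystem M S)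
    (hfs : L.FullSupport) {k : ℕ} (e : Fin k ≃ S) (πs : L.DPolicy)
    (N : ℕ) (hN : 1 ≤ N) (δ : ℝ) (hδ0 : 0 < δ) (hδ1 : δ < 1)
    (R : Set L.DPolicy) (hR : R.Nonempty)
    (pihat : (Fin N → S) → L.DPolicy)
    (hpihat : ∀ shat : Fin N → S, pihat shat ∈ R ∧ ∀ π ∈ R,
      L.trainAccuracy shat π πs -
          Real.sqrt ((-2 * L.coherence e π + Real.logb 2 (Real.exp 1) +
            Real.logb 2 (1 / δ)) / (2 * (N : ℝ))) ≤
        L.trainAccuracy shat (pihat shat) πs -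
          Real.sqrt ((-2 * L.coherence e (pihat shat) + Real.logb 2 (Real.exp 1) +
            Real.logb 2 (1 / δ)) / (2 * (N : ℝ))))
    (pibar : L.DPolicy) (hpibar : pibar ∈ R ∧ ∀ π ∈ R,
      L.accuracy π πs ≤ L.accuracy pibar πs) :
    1 - δ ≤
      (Nat.card {shat : Fin N → S //
          L.accuracy pibar πs -
              2 * Real.sqrt ((2 * max (-(L.coherence e (pihat shat)))
                  (-(L.coherence e pibar)) + Real.logb 2 (Real.exp 1) +
                Real.logb 2 (1 / δ)) / (2 * (N : ℝ))) ≤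
            L.accuracy (pihat shat) πs} : ℝ) /
        ((Fintype.card S : ℝ) ^ N) := by
  classical
  -- basic positivity facts
  have hcard : (0 : ℝ) < (Fintype.card S : ℝ) := by exact_mod_cast Fintype.card_pos
  have hNpos : (0 : ℝ) < (N : ℝ) := by exact_mod_cast hN
  have hlog2 : (0 : ℝ) < Real.log 2 := Real.log_pos (by norm_num)
  have hlog2le : Real.log 2 ≤ 1 := by
    have h2e : (2 : ℝ) ≤ Real.exp 1 := by nlinarith [Real.exp_one_gt_d9]
    calc Real.log 2 ≤ Real.log (Real.exp 1) := Real.log_le_log (by norm_num) h2e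
      _ = 1 := Real.log_exp 1
  have hlbe : Real.logb 2 (Real.exp 1) = 1 / Real.log 2 := by
    rw [Real.logb, Real.log_exp]
  have hlbδ : Real.logb 2 (1 / δ) = - Real.log δ / Real.log 2 := by
    rw [Real.logb, one_div, Real.log_inv]
  have hlogδ : Real.log δ < 0 := Real.log_neg hδ0 hδ1
  -- the regularization radius
  set B : L.DPolicy → ℝ := fun π => -2 * L.coherence e π + Real.logb 2 (Real.exp 1) +
    Real.logb 2 (1 / δ) with hB_def
  set ε : L.DPolicy → ℝ := fun π => Real.sqrt (B π / (2 * (N : ℝ))) with hε_def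
  have hχ : ∀ π : L.DPolicy, L.coherence e π ≤ 0 := fun π => L.coherence_nonpos hfs e π
  have hBpos : ∀ π : L.DPolicy, 0 < B π := by
    intro π
    have h1 : 0 < Real.logb 2 (Real.exp 1) := by rw [hlbe]; positivity
    have h2 : 0 < Real.logb 2 (1 / δ) := by
      rw [hlbδ]; exact div_pos (by linarith) hlog2
    have := hχ π
    simp only [hB_def]; nlinarith
  have hε_nonneg : ∀ π, 0 ≤ ε π := fun π => Real.sqrt_nonneg _
  have hε_sq : ∀ π, (ε π) ^ 2 = B π / (2 * (N : ℝ)) := by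
    intro π
    exact Real.sq_sqrt (le_of_lt (div_pos (hBpos π) (mul_pos two_pos hNpos)))
  -- indicator functions
  set x : L.DPolicy → S → ℝ := fun π s => if (π s : M) = ((πs s : M)) then (1 : ℝ) else 0
    with hx_def
  have hx01 : ∀ π s, x π s = 0 ∨ x π s = 1 := by
    intro π s
    by_cases h : (π s : M) = ((πs s : M)) <;> simp [hx_def, h]
    all_goals tauto
  have hacc : ∀ π : L.DPolicy, L.accuracy π πs = (∑ s, x π s) / (Fintype.card S : ℝ) := by
    intro π; rfl
  have htrain : ∀ (shat : Fin N → S) (π : L.DPolicy),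
      L.trainAccuracy shat π πs = (∑ i, x π (shat i)) / (N : ℝ) := by
    intro shat π; rfl
  -- bad events
  set BadP : L.DPolicy → Finset (Fin N → S) := fun π =>
    Finset.univ.filter fun shat : Fin N → S =>
      (N : ℝ) * ((∑ s, x π s) / (Fintype.card S : ℝ)) + N * (ε π) ≤ ∑ i, x π (shat i)
    with hBadP_def
  set BadM : L.DPolicy → Finset (Fin N → S) := fun π =>
    Finset.univ.filter fun shat : Fin N → S =>
      (N : ℝ) * ((∑ s, (1 - x π s)) / (Fintype.card S : ℝ)) + N * (ε π) ≤
        ∑ i, (1 - x π (shat i))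
    with hBadM_def
  have hBadP_card : ∀ π, ((BadP π).card : ℝ) ≤
      Real.exp (-2 * N * (ε π) ^ 2) * (Fintype.card S : ℝ) ^ N := by
    intro π
    exact hoeffding_count N (x π) (hx01 π) (ε π) (hε_nonneg π)
  have hBadM_card : ∀ π, ((BadM π).card : ℝ) ≤
      Real.exp (-2 * N * (ε π) ^ 2) * (Fintype.card S : ℝ) ^ N := by
    intro π
    exact hoeffding_count N (fun s => 1 - x π s)
      (fun s => by rcases hx01 π s with h | h <;> simp [h]) (ε π) (hε_nonneg π)
  -- exponent bound
  have hexpB : ∀ π : L.DPolicy, Real.exp (-2 * N * (ε π) ^ 2)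
      ≤ (δ / 2) * L.prodAlong 0 π ⇑e := by
    intro π
    have harg : -2 * (N : ℝ) * (ε π) ^ 2 = - B π := by
      rw [hε_sq π]; field_simp
    rw [harg]
    have hBexpand : - B π = 2 * L.coherence e π + (- Real.logb 2 (Real.exp 1)) +
        (- Real.logb 2 (1 / δ)) := by simp only [hB_def]; ring
    rw [hBexpand, Real.exp_add, Real.exp_add]
    have h1 : Real.exp (2 * L.coherence e π) ≤ L.prodAlong 0 π ⇑e := by
      rw [← L.exp_coherence hfs e π]
      apply Real.exp_le_exp.mpr
      nlinarith [hχ π, hlog2, hlog2le]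
    have h2 : Real.exp (- Real.logb 2 (Real.exp 1)) ≤ 1 / 2 := by
      rw [hlbe]
      have : Real.exp (- Real.log 2) = 1 / 2 := by
        rw [Real.exp_neg, Real.exp_log (by norm_num : (0:ℝ) < 2)]; norm_num
      rw [← this]
      apply Real.exp_le_exp.mpr
      rw [neg_le_neg_iff]
      rw [le_div_iff₀ hlog2]
      nlinarith
    have h3 : Real.exp (- Real.logb 2 (1 / δ)) ≤ δ := by
      rw [hlbδ, neg_div, neg_neg]
      calc Real.exp (Real.log δ / Real.log 2) ≤ Real.exp (Real.log δ) := by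
            apply Real.exp_le_exp.mpr
            rw [div_le_iff₀ hlog2]
            nlinarith
        _ = δ := Real.exp_log hδ0
    calc Real.exp (2 * L.coherence e π) * Real.exp (- Real.logb 2 (Real.exp 1)) *
          Real.exp (- Real.logb 2 (1 / δ))
        ≤ L.prodAlong 0 π ⇑e * (1/2) * δ := by
          apply mul_le_mul
          · apply mul_le_mul h1 h2 (Real.exp_pos _).le
              (le_of_lt (L.prodAlong_pos hfs e π))
          · exact h3
          · exact (Real.exp_pos _).le
          · exact mul_nonneg (L.prodAlong_pos hfs e π).le (by norm_num)
      _ = (δ / 2) * L.prodAlong 0 π ⇑e := by ring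
  -- good event
  set Good : Finset (Fin N → S) := Finset.univ.filter fun shat : Fin N → S =>
      ∀ π : L.DPolicy, |L.trainAccuracy shat π πs - L.accuracy π πs| ≤ ε π
    with hGood_def
  -- the complement of Good is covered by the bad events
  have hcover : Finset.univ.filter (fun shat : Fin N → S =>
      ¬ ∀ π : L.DPolicy, |L.trainAccuracy shat π πs - L.accuracy π πs| ≤ ε π)
      ⊆ Finset.univ.biUnion fun π : L.DPolicy => BadP π ∪ BadM π := by
    intro shat hs
    rw [Finset.mem_filter] at hs
    push_neg at hs
    obtain ⟨π, hπ⟩ := hs.2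
    rw [Finset.mem_biUnion]
    refine ⟨π, Finset.mem_univ π, ?_⟩
    rw [htrain, hacc] at hπ
    rw [Finset.mem_union]
    rcases lt_abs.mp hπ with h | h
    · left
      rw [hBadP_def]
      simp only [Finset.mem_filter, Finset.mem_univ, true_and]
      set A := ∑ i, x π (shat i)
      set m := (∑ s, x π s) / (Fintype.card S : ℝ)
      have hA : ε π ≤ A / N - m := by nlinarith [h]
      have hmul : (N:ℝ) * (A / N) = A := by field_simp
      nlinarith [mul_le_mul_of_nonneg_left hA hNpos.le, hmul]
    · right
      rw [hBadM_def]
      simp only [Finset.mem_filter, Finset.mem_univ, true_and]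
      have hsum1 : ∑ s, (1 - x π s) = (Fintype.card S : ℝ) - ∑ s, x π s := by
        rw [Finset.sum_sub_distrib]; simp
      have hsum2 : ∑ i, (1 - x π (shat i)) = (N : ℝ) - ∑ i, x π (shat i) := by
        rw [Finset.sum_sub_distrib]; simp
      rw [hsum1, hsum2]
      set A := ∑ i, x π (shat i)
      set m := (∑ s, x π s) / (Fintype.card S : ℝ)
      have hm : ((Fintype.card S : ℝ) - ∑ s, x π s) / (Fintype.card S : ℝ) = 1 - m := by
        rw [sub_div, div_self hcard.ne']
      rw [hm]
      have hA : ε π ≤ m - A / N := by nlinarith [h]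
      have hmul : (N:ℝ) * (A / N) = A := by field_simp
      nlinarith [mul_le_mul_of_nonneg_left hA hNpos.le, hmul]
  -- cardinality bound on the complement of Good
  have hnotGood : ((Finset.univ.filter (fun shat : Fin N → S =>
      ¬ ∀ π : L.DPolicy, |L.trainAccuracy shat π πs - L.accuracy π πs| ≤ ε π)).card : ℝ)
      ≤ δ * (Fintype.card S : ℝ) ^ N := by
    have h1 : (Finset.univ.filter (fun shat : Fin N → S =>
        ¬ ∀ π : L.DPolicy, |L.trainAccuracy shat π πs - L.accuracy π πs| ≤ ε π)).card
        ≤ ∑ π : L.DPolicy, (BadP π ∪ BadM π).card :=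
      le_trans (Finset.card_le_card hcover) (Finset.card_biUnion_le)
    calc ((Finset.univ.filter (fun shat : Fin N → S =>
          ¬ ∀ π : L.DPolicy, |L.trainAccuracy shat π πs - L.accuracy π πs| ≤ ε π)).card : ℝ)
        ≤ ((∑ π : L.DPolicy, (BadP π ∪ BadM π).card : ℕ) : ℝ) := by exact_mod_cast h1
      _ = ∑ π : L.DPolicy, ((BadP π ∪ BadM π).card : ℝ) := by push_cast; rfl
      _ ≤ ∑ π : L.DPolicy, (δ * L.prodAlong 0 π ⇑e * (Fintype.card S : ℝ) ^ N) := by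
          apply Finset.sum_le_sum
          intro π _
          calc ((BadP π ∪ BadM π).card : ℝ) ≤ ((BadP π).card : ℝ) + ((BadM π).card : ℝ) := by
                exact_mod_cast Finset.card_union_le _ _
            _ ≤ 2 * (Real.exp (-2 * N * (ε π) ^ 2) * (Fintype.card S : ℝ) ^ N) := by
                have := hBadP_card π; have := hBadM_card π; linarith
            _ ≤ 2 * ((δ / 2) * L.prodAlong 0 π ⇑e * (Fintype.card S : ℝ) ^ N) := by
                have h := mul_le_mul_of_nonneg_right (hexpB π)
                  (by positivity : (0:ℝ) ≤ (Fintype.card S : ℝ) ^ N)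
                nlinarith [h]
            _ = δ * L.prodAlong 0 π ⇑e * (Fintype.card S : ℝ) ^ N := by ring
      _ = δ * (Fintype.card S : ℝ) ^ N := by
          rw [← Finset.sum_mul, ← Finset.mul_sum, L.sum_prodAlong e, mul_one]
  -- Good has large cardinality
  have hGoodcard : (Fintype.card S : ℝ) ^ N - δ * (Fintype.card S : ℝ) ^ N
      ≤ (Good.card : ℝ) := by
    have hsplit := Finset.card_filter_add_card_filter_not
      (s := (Finset.univ : Finset (Fin N → S)))
      (p := fun shat : Fin N → S =>
        ∀ π : L.DPolicy, |L.trainAccuracy shat π πs - L.accuracy π πs| ≤ ε π)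
    rw [Finset.card_univ, Fintype.card_fun, Fintype.card_fin] at hsplit
    have hcast : (Good.card : ℝ) + ((Finset.univ.filter (fun shat : Fin N → S =>
        ¬ ∀ π : L.DPolicy, |L.trainAccuracy shat π πs - L.accuracy π πs| ≤ ε π)).card : ℝ)
        = (Fintype.card S : ℝ) ^ N := by
      rw [hGood_def]
      exact_mod_cast hsplit
    linarith
  -- Good is contained in the target event
  set Q : (Fin N → S) → Prop := fun shat =>
    L.accuracy pibar πs -
        2 * Real.sqrt ((2 * max (-(L.coherence e (pihat shat)))
            (-(L.coherence e pibar)) + Real.logb 2 (Real.exp 1) +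
          Real.logb 2 (1 / δ)) / (2 * (N : ℝ))) ≤
      L.accuracy (pihat shat) πs with hQ_def
  have hsub : Good ⊆ Finset.univ.filter Q := by
    intro shat hs
    rw [hGood_def, Finset.mem_filter] at hs
    have hG := hs.2
    rw [Finset.mem_filter]
    refine ⟨Finset.mem_univ _, ?_⟩
    have h1 := (abs_le.mp (hG (pihat shat))).2
    have h3 := (abs_le.mp (hG pibar)).1
    have h2 := (hpihat shat).2 pibar hpibar.1
    have hεhat : ε (pihat shat) = Real.sqrt ((-2 * L.coherence e (pihat shat) +
        Real.logb 2 (Real.exp 1) + Real.logb 2 (1 / δ)) / (2 * (N : ℝ))) := rfl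
    have hεbar : ε pibar = Real.sqrt ((-2 * L.coherence e pibar +
        Real.logb 2 (Real.exp 1) + Real.logb 2 (1 / δ)) / (2 * (N : ℝ))) := rfl
    rw [← hεhat, ← hεbar] at h2
    have hεmax : ε pibar ≤ Real.sqrt ((2 * max (-(L.coherence e (pihat shat)))
        (-(L.coherence e pibar)) + Real.logb 2 (Real.exp 1) +
        Real.logb 2 (1 / δ)) / (2 * (N : ℝ))) := by
      rw [hε_def]
      apply Real.sqrt_le_sqrt
      apply div_le_div_of_nonneg_right ?_ (by positivity : (0:ℝ) ≤ 2 * (N:ℝ))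
      nlinarith [le_max_right (-(L.coherence e (pihat shat))) (-(L.coherence e pibar))]
    show Q shat
    rw [hQ_def]
    dsimp only
    nlinarith [h1, h2, h3, hεmax]
  -- conclude
  have hTarget : (Fintype.card S : ℝ) ^ N - δ * (Fintype.card S : ℝ) ^ N
      ≤ ((Finset.univ.filter Q).card : ℝ) := by
    have := Finset.card_le_card hsub
    have : (Good.card : ℝ) ≤ ((Finset.univ.filter Q).card : ℝ) := by exact_mod_cast this
    linarith
  have hNatcard : (Nat.card {shat : Fin N → S // Q shat} : ℝ)
      = ((Finset.univ.filter Q).card : ℝ) := by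
    rw [Nat.card_eq_fintype_card]
    congr 1
    convert Fintype.card_subtype (p := Q) using 2
  rw [le_div_iff₀ (by positivity : (0:ℝ) < (Fintype.card S : ℝ) ^ N)]
  rw [show (Nat.card {shat : Fin N → S //
      L.accuracy pibar πs -
          2 * Real.sqrt ((2 * max (-(L.coherence e (pihat shat)))
              (-(L.coherence e pibar)) + Real.logb 2 (Real.exp 1) +
            Real.logb 2 (1 / δ)) / (2 * (N : ℝ))) ≤
        L.accuracy (pihat shat) πs} : ℝ) = (Nat.card {shat : Fin N → S // Q shat} : ℝ) from rfl]
  rw [hNatcard]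
  nlinarith [hTarget]
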